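/- Let Y be a Minkowski-reduced 3×3 positive definite symmetric real matrix. Then for all n ∈ ℝ³ we have nᵀYn ≥ (1/100)·Y_{11}·nᵀn. -/

import Mathlib

open Matrix

/-- The quadratic form `vᵀ Y v` attached to a real 3×3 matrix. -/
def quadForm (Y : Matrix (Fin 3) (Fin 3) ℝ) (v : Fin 3 → ℝ) : ℝ :=
  ∑ i, ∑ j, v i * Y i j * v j

/-- A real symmetric positive definite 3×3 matrix is Minkowski-reduced if
(a) for all `j` and all integer vectors `v` with `gcd (v j, …, v 2) = 1`
we have `vᵀ Y v ≥ Y j j`, and (b) `Y 0 1 ≥ 0` and `Y 1 2 ≥ 0`. -/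
def MinkowskiReduced (Y : Matrix (Fin 3) (Fin 3) ℝ) : Prop :=
  Y.IsSymm ∧ Y.PosDef ∧
  (∀ j : Fin 3, ∀ v : Fin 3 → ℤ,
      Finset.gcd (Finset.univ.filter fun i => j ≤ i) v = 1 →
      quadForm Y (fun i => (v i : ℝ)) ≥ Y j j) ∧
  0 ≤ Y 0 1 ∧ 0 ≤ Y 1 2

set_option maxHeartbeats 1000000 in
private lemma mink_core (a b p q r u v w : ℝ) (hu : 0 ≤ u) (hv : 0 ≤ v) (hw : 0 ≤ w)
    (ha : 0 < a) (hab : a ≤ b)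
    (hp : -a ≤ 2*p) (hq : -a ≤ 2*q) (hr : -b ≤ 2*r)
    (hS : 0 ≤ a+b+2*p+2*q+2*r) :
    a*u^2+b*v^2+b*w^2+2*p*u*v+2*q*u*w+2*r*v*w ≥ (1/100)*a*(u^2+v^2+w^2) := by
  rcases le_total (v*w) (u*v) with h1 | h1
  · rcases le_total (v*w) (u*w) with h2 | h2
    · -- vw is min
      nlinarith [mul_nonneg (by linarith : (0:ℝ) ≤ a+2*p) (by linarith : (0:ℝ) ≤ u*v - v*w),
        mul_nonneg (by linarith : (0:ℝ) ≤ a+2*q) (by linarith : (0:ℝ) ≤ u*w - v*w),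
        mul_nonneg hS (mul_nonneg hv hw),
        mul_nonneg (by linarith : (0:ℝ) ≤ b-a) (by nlinarith [sq_nonneg (v-w), mul_nonneg hv hw] : (0:ℝ) ≤ v^2+w^2-v*w),
        mul_nonneg ha.le (sq_nonneg (3*u-4*v)), mul_nonneg ha.le (sq_nonneg (3*u-4*w)),
        mul_nonneg ha.le (sq_nonneg u), mul_nonneg ha.le (sq_nonneg v), mul_nonneg ha.le (sq_nonneg w)]
    · -- uw is min
      nlinarith [mul_nonneg (by linarith : (0:ℝ) ≤ a+2*p) (by linarith : (0:ℝ) ≤ u*v - u*w),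
        mul_nonneg (by linarith : (0:ℝ) ≤ b+2*r) (by linarith : (0:ℝ) ≤ v*w - u*w),
        mul_nonneg hS (mul_nonneg hu hw),
        mul_nonneg (by linarith : (0:ℝ) ≤ b-a) (by nlinarith [sq_nonneg (2*v-3*w), mul_nonneg ha.le (sq_nonneg v)] : (0:ℝ) ≤ v^2+w^2-v*w),
        mul_nonneg ha.le (sq_nonneg (3*u-2*v)), mul_nonneg ha.le (sq_nonneg (2*v-3*w)),
        mul_nonneg ha.le (sq_nonneg u), mul_nonneg ha.le (sq_nonneg v), mul_nonneg ha.le (sq_nonneg w)]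
  · rcases le_total (u*v) (u*w) with h2 | h2
    · -- uv is min
      nlinarith [mul_nonneg (by linarith : (0:ℝ) ≤ a+2*q) (by linarith : (0:ℝ) ≤ u*w - u*v),
        mul_nonneg (by linarith : (0:ℝ) ≤ b+2*r) (by linarith : (0:ℝ) ≤ v*w - u*v),
        mul_nonneg hS (mul_nonneg hu hv),
        mul_nonneg (by linarith : (0:ℝ) ≤ b-a) (by nlinarith [sq_nonneg (2*w-3*v)] : (0:ℝ) ≤ v^2+w^2-v*w),
        mul_nonneg ha.le (sq_nonneg (3*u-2*w)), mul_nonneg ha.le (sq_nonneg (2*w-3*v)),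
        mul_nonneg ha.le (sq_nonneg u), mul_nonneg ha.le (sq_nonneg v), mul_nonneg ha.le (sq_nonneg w)]
    · -- uw is min again
      nlinarith [mul_nonneg (by linarith : (0:ℝ) ≤ a+2*p) (by linarith : (0:ℝ) ≤ u*v - u*w),
        mul_nonneg (by linarith : (0:ℝ) ≤ b+2*r) (by linarith : (0:ℝ) ≤ v*w - u*w),
        mul_nonneg hS (mul_nonneg hu hw),
        mul_nonneg (by linarith : (0:ℝ) ≤ b-a) (by nlinarith [sq_nonneg (2*v-3*w), mul_nonneg ha.le (sq_nonneg v)] : (0:ℝ) ≤ v^2+w^2-v*w),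
        mul_nonneg ha.le (sq_nonneg (3*u-2*v)), mul_nonneg ha.le (sq_nonneg (2*v-3*w)),
        mul_nonneg ha.le (sq_nonneg u), mul_nonneg ha.le (sq_nonneg v), mul_nonneg ha.le (sq_nonneg w)]

private lemma mink_key (a b c p q r x y z : ℝ) (ha : 0 < a) (hab : a ≤ b) (hbc : b ≤ c)
    (hp0 : 0 ≤ p) (hp : 2*p ≤ a) (hr0 : 0 ≤ r) (hr : 2*r ≤ b)
    (hq1 : -a ≤ 2*q) (hq2 : 2*q ≤ a)
    (h1 : 0 ≤ a+b-2*p+2*q-2*r) (h2 : 0 ≤ a+b-2*p-2*q+2*r) (h3 : 0 ≤ a+b+2*p-2*q-2*r) :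
    a*x^2+b*y^2+c*z^2+2*p*x*y+2*q*x*z+2*r*y*z ≥ (1/100)*a*(x^2+y^2+z^2) := by
  have hcz : b*z^2 ≤ c*z^2 := mul_le_mul_of_nonneg_right hbc (sq_nonneg z)
  have hS0 : 0 ≤ a+b+2*p+2*q+2*r := by linarith
  rcases le_total 0 x with hx | hx <;> rcases le_total 0 y with hy | hy <;>
    rcases le_total 0 z with hz | hz
  · have := mink_core a b p q r x y z hx hy hz ha hab (by linarith) hq1 (by linarith) hS0
    linarith [this, hcz]
  · have := mink_core a b p (-q) (-r) x y (-z) hx hy (by linarith) ha hab (by linarith)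
      (by linarith) (by linarith) (by linarith)
    linarith [this, hcz]
  · have := mink_core a b (-p) q (-r) x (-y) z hx (by linarith) hz ha hab (by linarith)
      hq1 (by linarith) (by linarith)
    linarith [this, hcz]
  · have := mink_core a b (-p) (-q) r x (-y) (-z) hx (by linarith) (by linarith) ha hab
      (by linarith) (by linarith) (by linarith) (by linarith)
    linarith [this, hcz]
  · have := mink_core a b (-p) (-q) r (-x) y z (by linarith) hy hz ha hab
      (by linarith) (by linarith) (by linarith) (by linarith)
    linarith [this, hcz]
  · have := mink_core a b (-p) q (-r) (-x) y (-z) (by linarith) hy (by linarith) ha hab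
      (by linarith) hq1 (by linarith) (by linarith)
    linarith [this, hcz]
  · have := mink_core a b p (-q) (-r) (-x) (-y) z (by linarith) (by linarith) hz ha hab
      (by linarith) (by linarith) (by linarith) (by linarith)
    linarith [this, hcz]
  · have := mink_core a b p q r (-x) (-y) (-z) (by linarith) (by linarith) (by linarith)
      ha hab (by linarith) hq1 (by linarith) hS0
    linarith [this, hcz]

theorem stmt_1 (Y : Matrix (Fin 3) (Fin 3) ℝ) (hY : MinkowskiReduced Y) :
    ∀ n : Fin 3 → ℝ, quadForm Y n ≥ (1 / 100) * Y 0 0 * ∑ i, n i ^ 2 := by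
  obtain ⟨hsym, hpd, hmin, hp0, hr0⟩ := hY
  have e10 : Y 1 0 = Y 0 1 := by rw [← hsym.apply]
  have e20 : Y 2 0 = Y 0 2 := by rw [← hsym.apply]
  have e21 : Y 2 1 = Y 1 2 := by rw [← hsym.apply]
  have ha : 0 < Y 0 0 := by
    have := (Matrix.posDef_iff_dotProduct_mulVec.mp hpd).2 (x := fun i => if i = 0 then 1 else 0) (by intro h; simpa using congrFun h 0)
    simpa [dotProduct, Matrix.mulVec, Fin.sum_univ_three] using this
  have hab : Y 0 0 ≤ Y 1 1 := by
    have := hmin 0 ![0,1,0] (by decide)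
    simpa [quadForm, Fin.sum_univ_three] using this
  have hbc : Y 1 1 ≤ Y 2 2 := by
    have := hmin 1 ![0,0,1] (by decide)
    simpa [quadForm, Fin.sum_univ_three] using this
  have hp : 2 * Y 0 1 ≤ Y 0 0 := by
    have := hmin 1 ![1,-1,0] (by decide)
    simp [quadForm, Fin.sum_univ_three, e10] at this
    linarith
  have hq2 : 2 * Y 0 2 ≤ Y 0 0 := by
    have := hmin 2 ![1,0,-1] (by decide)
    simp [quadForm, Fin.sum_univ_three, e20] at this
    linarith
  have hq1 : -(Y 0 0) ≤ 2 * Y 0 2 := by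
    have := hmin 2 ![1,0,1] (by decide)
    simp [quadForm, Fin.sum_univ_three, e20] at this
    linarith
  have hr : 2 * Y 1 2 ≤ Y 1 1 := by
    have := hmin 2 ![0,1,-1] (by decide)
    simp [quadForm, Fin.sum_univ_three, e21] at this
    linarith
  have h1 : 0 ≤ Y 0 0 + Y 1 1 - 2*Y 0 1 + 2*Y 0 2 - 2*Y 1 2 := by
    have := hmin 2 ![1,-1,1] (by decide)
    simp [quadForm, Fin.sum_univ_three, e10, e20, e21] at this
    linarith
  have h2 : 0 ≤ Y 0 0 + Y 1 1 - 2*Y 0 1 - 2*Y 0 2 + 2*Y 1 2 := by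
    have := hmin 2 ![-1,1,1] (by decide)
    simp [quadForm, Fin.sum_univ_three, e10, e20, e21] at this
    linarith
  have h3 : 0 ≤ Y 0 0 + Y 1 1 + 2*Y 0 1 - 2*Y 0 2 - 2*Y 1 2 := by
    have := hmin 2 ![1,1,-1] (by decide)
    simp [quadForm, Fin.sum_univ_three, e10, e20, e21] at this
    linarith
  intro n
  have key := mink_key (Y 0 0) (Y 1 1) (Y 2 2) (Y 0 1) (Y 0 2) (Y 1 2)
    (n 0) (n 1) (n 2) ha hab hbc hp0 (by linarith) hr0 (by linarith) hq1 hq2 h1 h2 h3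
  simp only [quadForm, Fin.sum_univ_three, e10, e20, e21]
  linarith [key]
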